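/- arXiv:math/0610684 — 3 statements merged into one kernel-verified Lean document; each statement's English description precedes it below -/
import Mathlib

section
/- For every positive integer m, the number of sublattices of index m in ℤ^n equals the number of n×n lower-triangular integer matrices (r_{ij}) with r_{ii} > r_{ij} ≥ 0 for all 1 ≤ j < i ≤ n and r_{11}r_{22}⋯r_{nn} = m. -/
set_option maxHeartbeats 1000000
set_option maxRecDepth 10000


open AddSubgroup

section GroupSide

variable {A : Type*} [AddCommGroup A]

lemma range_inr_eq_ker_fst : (AddMonoidHom.inr ℤ A).range = (AddMonoidHom.fst ℤ A).ker := by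
  ext x
  simp [AddMonoidHom.mem_range, AddMonoidHom.mem_ker, Prod.ext_iff, eq_comm,
    AddSubgroup.mem_prod]

lemma key_index (H : AddSubgroup (ℤ × A)) :
    H.index = (H.comap (AddMonoidHom.inr ℤ A)).index * (H.map (AddMonoidHom.fst ℤ A)).index := by
  have h1 : (H.comap (AddMonoidHom.inr ℤ A)).index = H.relIndex (AddMonoidHom.inr ℤ A).range :=
    AddSubgroup.index_comap H _
  have h2 : H.relIndex (H ⊔ (AddMonoidHom.inr ℤ A).range) =
      H.relIndex (AddMonoidHom.inr ℤ A).range :=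
    AddSubgroup.relIndex_sup_left _ H
  have h4 : (H ⊔ (AddMonoidHom.inr ℤ A).range) =
      (H.map (AddMonoidHom.fst ℤ A)).comap (AddMonoidHom.fst ℤ A) := by
    rw [AddSubgroup.comap_map_eq, range_inr_eq_ker_fst]
  have h5 : ((H.map (AddMonoidHom.fst ℤ A)).comap (AddMonoidHom.fst ℤ A)).index =
      (H.map (AddMonoidHom.fst ℤ A)).index :=
    AddSubgroup.index_comap_of_surjective _ Prod.fst_surjective
  have h3 := AddSubgroup.relIndex_mul_index
    (le_sup_left : H ≤ H ⊔ (AddMonoidHom.inr ℤ A).range)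
  rw [h2, ← h1, h4, h5] at h3
  exact h3.symm

end GroupSide

section GroupSide2

variable {A : Type*} [AddCommGroup A]

lemma eq_zmultiples_index (S : AddSubgroup ℤ) (h : S.index ≠ 0) :
    S = AddSubgroup.zmultiples ((S.index : ℤ)) := by
  obtain ⟨a, ha⟩ := Int.subgroup_cyclic S
  have h1 : S = AddSubgroup.zmultiples a := by
    rw [ha, AddSubgroup.zmultiples_eq_closure]
  have h2 : S.index = a.natAbs := by rw [h1, Int.index_zmultiples]
  rw [h2, Int.zmultiples_natAbs, ← h1]

/-- Build a subgroup of `ℤ × A` from `H₀ ≤ A`, `d : ℕ`, and `x : A`. -/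
def buildSub (H₀ : AddSubgroup A) (d : ℕ) (x : A) : AddSubgroup (ℤ × A) :=
  (H₀.map (AddMonoidHom.inr ℤ A)) ⊔ AddSubgroup.zmultiples ((d : ℤ), x)

lemma mem_buildSub {H₀ : AddSubgroup A} {d : ℕ} {x : A} {z : ℤ × A} :
    z ∈ buildSub H₀ d x ↔ ∃ h ∈ H₀, ∃ k : ℤ, z = (0, h) + k • ((d : ℤ), x) := by
  rw [buildSub, AddSubgroup.mem_sup]
  constructor
  · rintro ⟨y, hy, w, hw, rfl⟩
    obtain ⟨h, hh, rfl⟩ := hy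
    obtain ⟨k, rfl⟩ := AddSubgroup.mem_zmultiples_iff.mp hw
    exact ⟨h, hh, k, rfl⟩
  · rintro ⟨h, hh, k, rfl⟩
    exact ⟨(0, h), ⟨h, hh, rfl⟩, k • ((d : ℤ), x),
      AddSubgroup.zsmul_mem _ (AddSubgroup.mem_zmultiples _) k, rfl⟩

lemma map_fst_buildSub (H₀ : AddSubgroup A) (d : ℕ) (x : A) :
    (buildSub H₀ d x).map (AddMonoidHom.fst ℤ A) = AddSubgroup.zmultiples ((d : ℤ)) := by
  ext t
  simp only [AddSubgroup.mem_map, AddMonoidHom.coe_fst]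
  constructor
  · rintro ⟨z, hz, rfl⟩
    obtain ⟨h, hh, k, rfl⟩ := mem_buildSub.mp hz
    refine AddSubgroup.mem_zmultiples_iff.mpr ⟨k, ?_⟩
    simp
  · rintro ht
    obtain ⟨k, rfl⟩ := AddSubgroup.mem_zmultiples_iff.mp ht
    exact ⟨(0, 0) + k • ((d : ℤ), x), mem_buildSub.mpr ⟨0, H₀.zero_mem, k, by simp⟩, by simp⟩

lemma comap_inr_buildSub (H₀ : AddSubgroup A) {d : ℕ} (hd : d ≠ 0) (x : A) :
    (buildSub H₀ d x).comap (AddMonoidHom.inr ℤ A) = H₀ := by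
  ext a
  simp only [AddSubgroup.mem_comap, AddMonoidHom.inr_apply]
  constructor
  · intro ha
    obtain ⟨h, hh, k, hk⟩ := mem_buildSub.mp ha
    have h1 : (0 : ℤ) = k * d := by
      have := congrArg Prod.fst hk
      simpa using this
    have hk0 : k = 0 := by
      rcases mul_eq_zero.mp h1.symm with h' | h'
      · exact h'
      · exact absurd h' (by exact_mod_cast hd)
    have h2 : a = h := by
      have := congrArg Prod.snd hk
      simpa [hk0] using this
    rwa [h2]
  · intro ha
    exact mem_buildSub.mpr ⟨a, ha, 0, by simp⟩

lemma index_buildSub (H₀ : AddSubgroup A) {d : ℕ} (hd : d ≠ 0) (x : A) :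
    (buildSub H₀ d x).index = H₀.index * d := by
  rw [key_index (buildSub H₀ d x), comap_inr_buildSub H₀ hd x, map_fst_buildSub,
    Int.index_zmultiples]
  simp

lemma buildSub_congr {H₀ : AddSubgroup A} {d : ℕ} {x y : A} (h : x - y ∈ H₀) :
    buildSub H₀ d x = buildSub H₀ d y := by
  have key : ∀ x y : A, x - y ∈ H₀ → buildSub H₀ d x ≤ buildSub H₀ d y := by
    intro x y hxy
    rw [buildSub, sup_le_iff]
    constructor
    · exact le_sup_left
    · rw [AddSubgroup.zmultiples_le]
      refine mem_buildSub.mpr ⟨x - y, hxy, 1, by simp [Prod.ext_iff]⟩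
  exact le_antisymm (key x y h) (key y x (by simpa using H₀.neg_mem h))

lemma buildSub_mem_diff {H₀ : AddSubgroup A} {d : ℕ} (hd : d ≠ 0) {x y : A}
    (h : buildSub H₀ d x = buildSub H₀ d y) : x - y ∈ H₀ := by
  have hx : ((d : ℤ), x) ∈ buildSub H₀ d x := mem_buildSub.mpr ⟨0, H₀.zero_mem, 1, by simp⟩
  have hy : ((d : ℤ), y) ∈ buildSub H₀ d y := mem_buildSub.mpr ⟨0, H₀.zero_mem, 1, by simp⟩
  have hdiff : ((0 : ℤ), x - y) ∈ buildSub H₀ d y := by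
    have := AddSubgroup.sub_mem _ (h ▸ hx) hy
    simpa [Prod.ext_iff] using this
  rw [← comap_inr_buildSub H₀ hd y]
  simpa [AddSubgroup.mem_comap] using hdiff

lemma map_fst_index_ne_zero {H : AddSubgroup (ℤ × A)} (h : H.index ≠ 0) :
    (H.map (AddMonoidHom.fst ℤ A)).index ≠ 0 := by
  intro h0
  rw [key_index H, h0, mul_zero] at h
  exact h rfl

lemma comap_inr_index_ne_zero {H : AddSubgroup (ℤ × A)} (h : H.index ≠ 0) :
    (H.comap (AddMonoidHom.inr ℤ A)).index ≠ 0 := by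
  intro h0
  rw [key_index H, h0, zero_mul] at h
  exact h rfl

lemma exists_buildSub (H : AddSubgroup (ℤ × A)) (h : H.index ≠ 0) :
    ∃ x : A, H = buildSub (H.comap (AddMonoidHom.inr ℤ A))
      ((H.map (AddMonoidHom.fst ℤ A)).index) x := by
  set d : ℕ := (H.map (AddMonoidHom.fst ℤ A)).index with hd
  have hd0 : d ≠ 0 := map_fst_index_ne_zero h
  have hmap : H.map (AddMonoidHom.fst ℤ A) = AddSubgroup.zmultiples ((d : ℤ)) :=
    eq_zmultiples_index _ hd0
  have hmem : ((d : ℤ)) ∈ H.map (AddMonoidHom.fst ℤ A) := by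
    rw [hmap]; exact AddSubgroup.mem_zmultiples _
  obtain ⟨w, hw, hw1⟩ := AddSubgroup.mem_map.mp hmem
  refine ⟨w.2, ?_⟩
  apply le_antisymm
  · intro g hg
    have hg1 : g.1 ∈ H.map (AddMonoidHom.fst ℤ A) := AddSubgroup.mem_map.mpr ⟨g, hg, rfl⟩
    rw [hmap] at hg1
    obtain ⟨k, hk⟩ := AddSubgroup.mem_zmultiples_iff.mp hg1
    have hwd : w = ((d : ℤ), w.2) := by
      ext
      · exact hw1
      · rfl
    have hsub : g - k • w ∈ H := AddSubgroup.sub_mem _ hg (AddSubgroup.zsmul_mem _ hw k)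
    have hw1' : w.1 = (d : ℤ) := hw1
    have hfst : (g - k • w).1 = 0 := by
      simp [hw1', ← hk, mul_comm]
    have hsnd : g - k • w = (0, g.2 - k • w.2) := by
      ext
      · exact hfst
      · rfl
    refine mem_buildSub.mpr ⟨g.2 - k • w.2, ?_, k, ?_⟩
    · simp only [AddSubgroup.mem_comap, AddMonoidHom.inr_apply]
      rw [← hsnd]; exact hsub
    · ext
      · simp [← hk, mul_comm]
      · simp
  · intro g hg
    obtain ⟨hh, hhm, k, rfl⟩ := mem_buildSub.mp hg
    have h1 : ((0 : ℤ), hh) ∈ H := hhm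
    have h2 : ((d : ℤ), w.2) ∈ H := by
      have hwd : w = ((d : ℤ), w.2) := by
        ext
        · exact hw1
        · rfl
      rwa [← hwd]
    exact AddSubgroup.add_mem _ h1 (AddSubgroup.zsmul_mem _ h2 k)

variable (A) in
/-- The data parametrizing finite-index subgroups of `ℤ × A`. -/
def SubData (m : ℕ) : Type _ :=
  Σ _d : {d : ℕ // d ∈ m.divisors},
    Σ H₀ : {H₀ : AddSubgroup A // H₀.index = m / _d.1}, A ⧸ H₀.1

/-- The map from data to subgroups. -/
noncomputable def subOfData {m : ℕ} (hm : m ≠ 0) (x : SubData A m) :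
    {H : AddSubgroup (ℤ × A) // H.index = m} := by
  obtain ⟨⟨d, hd⟩, ⟨H₀, h0⟩, v⟩ := x
  refine ⟨buildSub H₀ d v.out, ?_⟩
  have hdvd : d ∣ m := (Nat.mem_divisors.mp hd).1
  have hd0 : d ≠ 0 := by
    rintro rfl
    exact hm (Nat.eq_zero_of_zero_dvd hdvd)
  rw [index_buildSub H₀ hd0, h0, Nat.div_mul_cancel hdvd]

lemma subOfData_bijective {m : ℕ} (hm : m ≠ 0) :
    Function.Bijective (subOfData (A := A) hm) := by
  constructor
  · rintro ⟨⟨d, hd⟩, ⟨H₀, h0⟩, v⟩ ⟨⟨e, he⟩, ⟨K₀, k0⟩, w⟩ h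
    have hB : buildSub H₀ d v.out = buildSub K₀ e w.out := congrArg Subtype.val h
    have hd0 : d ≠ 0 := fun h' => hm (Nat.eq_zero_of_zero_dvd (h' ▸ (Nat.mem_divisors.mp hd).1))
    have he0 : e ≠ 0 := fun h' => hm (Nat.eq_zero_of_zero_dvd (h' ▸ (Nat.mem_divisors.mp he).1))
    have hde : d = e := by
      have := congrArg (fun S => (AddSubgroup.map (AddMonoidHom.fst ℤ A) S).index) hB
      simpa [map_fst_buildSub, Int.index_zmultiples] using this
    subst hde
    have hHK : H₀ = K₀ := by
      have := congrArg (fun S => S.comap (AddMonoidHom.inr ℤ A)) hB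
      simpa [comap_inr_buildSub _ hd0] using this
    subst hHK
    have hvw : v = w := by
      have hdiff := buildSub_mem_diff hd0 hB
      have := (QuotientAddGroup.eq_iff_sub_mem).mpr hdiff
      rwa [QuotientAddGroup.out_eq', QuotientAddGroup.out_eq'] at this
    subst hvw
    rfl
  · rintro ⟨H, hH⟩
    have hH0 : H.index ≠ 0 := hH ▸ hm
    set d : ℕ := (H.map (AddMonoidHom.fst ℤ A)).index with hddef
    have hd0 : d ≠ 0 := map_fst_index_ne_zero hH0
    have hkey := key_index H
    have hdvd : d ∣ m := by rw [← hH, hkey]; exact Dvd.intro_left _ rfl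
    have h0 : (H.comap (AddMonoidHom.inr ℤ A)).index = m / d := by
      rw [← hH, hkey, Nat.mul_div_cancel _ (Nat.pos_of_ne_zero hd0)]
    obtain ⟨x, hx⟩ := exists_buildSub H hH0
    refine ⟨⟨⟨d, Nat.mem_divisors.mpr ⟨hdvd, hm⟩⟩,
      ⟨H.comap (AddMonoidHom.inr ℤ A), h0⟩, QuotientAddGroup.mk x⟩, ?_⟩
    apply Subtype.ext
    show buildSub _ d (QuotientAddGroup.mk x).out = H
    have hout : ((QuotientAddGroup.mk x : A ⧸ (H.comap (AddMonoidHom.inr ℤ A))).out) - x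
        ∈ H.comap (AddMonoidHom.inr ℤ A) := by
      rw [← QuotientAddGroup.eq_iff_sub_mem, QuotientAddGroup.out_eq']
    rw [buildSub_congr hout, ← hx]

section MatrixSide

/-- Triangular matrix data. -/
def TriData (n m : ℕ) : Type :=
  {r : Fin n → Fin n → ℕ //
    (∀ i j, i < j → r i j = 0) ∧
    (∀ i j : Fin n, j < i → r i j < r i i) ∧
    ∏ i, r i i = m}

/-- The data parametrizing triangular matrices of size `n+1`. -/
def MatData (n m : ℕ) : Type :=
  Σ _d : {d : ℕ // d ∈ m.divisors},
    Σ r' : TriData n (m / _d.1), (∀ i : Fin n, Fin (r'.1 i i))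

/-- The underlying matrix. -/
def triMat {n : ℕ} (d : ℕ) (r' : Fin n → Fin n → ℕ) (c : Fin n → ℕ) :
    Fin (n + 1) → Fin (n + 1) → ℕ :=
  fun i => Fin.cases (fun j => Fin.cases d (fun _ => 0) j)
    (fun i' => fun j => Fin.cases (c i') (fun j' => r' i' j') j) i

/-- Build a triangular matrix of size `n+1` from the data. -/
def triOfData {n m : ℕ} (hm : m ≠ 0) (x : MatData n m) : TriData (n + 1) m :=
  ⟨triMat x.1.1 x.2.1.1 (fun i => (x.2.2 i : ℕ)), by
    obtain ⟨⟨d, hd⟩, ⟨r', h1, h2, h3⟩, c⟩ := x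
    refine ⟨?_, ?_, ?_⟩
    · intro i j hij
      induction i using Fin.cases with
      | zero =>
        induction j using Fin.cases with
        | zero => exact absurd hij (lt_irrefl _)
        | succ j' => simp only [triMat, Fin.cases_zero, Fin.cases_succ]
      | succ i' =>
        induction j using Fin.cases with
        | zero => exact absurd hij (by simp [Fin.lt_def])
        | succ j' =>
          have : i' < j' := Fin.succ_lt_succ_iff.mp hij
          simp only [triMat, Fin.cases_succ]
          exact h1 i' j' this
    · intro i j hji
      induction i using Fin.cases with
      | zero => exact absurd hji (by simp [Fin.lt_def])
      | succ i' =>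
        induction j using Fin.cases with
        | zero =>
          simp only [triMat, Fin.cases_succ, Fin.cases_zero]
          exact (c i').isLt
        | succ j' =>
          have : j' < i' := Fin.succ_lt_succ_iff.mp hji
          simp only [triMat, Fin.cases_succ]
          exact h2 i' j' this
    · rw [Fin.prod_univ_succ]
      simp only [triMat, Fin.cases_zero, Fin.cases_succ]
      rw [h3, Nat.mul_div_cancel' (Nat.mem_divisors.mp hd).1]⟩

lemma triOfData_bijective {n m : ℕ} (hm : m ≠ 0) :
    Function.Bijective (triOfData (n := n) hm) := by
  constructor
  · rintro ⟨⟨d, hd⟩, ⟨r', h1, h2, h3⟩, c⟩ ⟨⟨e, he⟩, ⟨s', g1, g2, g3⟩, b⟩ h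
    have hmat : triMat d r' (fun i => (c i : ℕ)) = triMat e s' (fun i => (b i : ℕ)) :=
      congrArg Subtype.val h
    have hde : d = e := by
      have := congrFun (congrFun hmat 0) 0
      simpa only [triMat, Fin.cases_zero] using this
    subst hde
    have hrs : r' = s' := by
      funext i j
      have := congrFun (congrFun hmat i.succ) j.succ
      simpa only [triMat, Fin.cases_succ] using this
    subst hrs
    have hcb : c = b := by
      funext i
      have := congrFun (congrFun hmat i.succ) 0
      ext
      simpa only [triMat, Fin.cases_succ, Fin.cases_zero] using this
    subst hcb
    rfl
  · rintro ⟨r, h1, h2, h3⟩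
    have hd0 : r 0 0 ≠ 0 := by
      intro h0
      apply hm
      rw [← h3]
      exact Finset.prod_eq_zero (Finset.mem_univ 0) h0
    have hdvd : r 0 0 ∣ m := by
      rw [← h3, Fin.prod_univ_succ]
      exact Dvd.intro _ rfl
    have hprod : ∏ i : Fin n, r i.succ i.succ = m / r 0 0 := by
      rw [← h3, Fin.prod_univ_succ, Nat.mul_div_cancel_left _ (Nat.pos_of_ne_zero hd0)]
    refine ⟨⟨⟨r 0 0, Nat.mem_divisors.mpr ⟨hdvd, hm⟩⟩,
      ⟨fun i j => r i.succ j.succ, ?_, ?_, hprod⟩,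
      fun i => ⟨r i.succ 0, h2 i.succ 0 (by simp [Fin.lt_def])⟩⟩, ?_⟩
    · intro i j hij
      exact h1 i.succ j.succ (Fin.succ_lt_succ_iff.mpr hij)
    · intro i j hji
      exact h2 i.succ j.succ (Fin.succ_lt_succ_iff.mpr hji)
    · apply Subtype.ext
      show triMat (r 0 0) (fun i j => r i.succ j.succ) (fun i => r i.succ 0) = r
      funext i j
      induction i using Fin.cases with
      | zero =>
        induction j using Fin.cases with
        | zero => simp only [triMat, Fin.cases_zero]
        | succ j' =>
          simp only [triMat, Fin.cases_zero, Fin.cases_succ]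
          exact (h1 0 j'.succ (by simp [Fin.lt_def])).symm
      | succ i' =>
        induction j using Fin.cases with
        | zero => simp only [triMat, Fin.cases_succ, Fin.cases_zero]
        | succ j' => simp only [triMat, Fin.cases_succ]

end MatrixSide

section Glue

/-- Transport subgroups of fixed index along an additive equivalence. -/
def subgroupIndexEquiv {G G' : Type*} [AddGroup G] [AddGroup G'] (e : G ≃+ G') (m : ℕ) :
    {H : AddSubgroup G // H.index = m} ≃ {H : AddSubgroup G' // H.index = m} where
  toFun H := ⟨H.1.map e.toAddMonoidHom, by
    rw [AddSubgroup.index_map_eq _ e.surjective (by rw [(AddMonoidHom.ker_eq_bot_iff _).mpr e.injective]; exact bot_le)]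
    exact H.2⟩
  invFun H := ⟨H.1.map e.symm.toAddMonoidHom, by
    rw [AddSubgroup.index_map_eq _ e.symm.surjective
      (by rw [(AddMonoidHom.ker_eq_bot_iff _).mpr e.symm.injective]; exact bot_le)]
    exact H.2⟩
  left_inv H := by
    apply Subtype.ext
    simp only [AddSubgroup.map_map]
    have : (e.symm.toAddMonoidHom.comp e.toAddMonoidHom) = AddMonoidHom.id G := by
      ext x; simp
    rw [this, AddSubgroup.map_id]
  right_inv H := by
    apply Subtype.ext
    simp only [AddSubgroup.map_map]
    have : (e.toAddMonoidHom.comp e.symm.toAddMonoidHom) = AddMonoidHom.id G' := by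
      ext x; simp
    rw [this, AddSubgroup.map_id]

/-- `ℤ^(n+1) ≃+ ℤ × ℤ^n`. -/
def piSuccAddEquiv (n : ℕ) : (Fin (n + 1) → ℤ) ≃+ ℤ × (Fin n → ℤ) where
  toFun f := (f 0, f ∘ Fin.succ)
  invFun p := Fin.cons p.1 p.2
  left_inv f := by
    funext i
    induction i using Fin.cases with
    | zero => simp
    | succ i' => simp
  right_inv p := by
    ext <;> simp
  map_add' f g := rfl

end Glue

theorem main_equiv : ∀ (n m : ℕ), m ≠ 0 →
    Nonempty ({H : AddSubgroup (Fin n → ℤ) // H.index = m} ≃ TriData n m) := by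
  intro n
  induction n with
  | zero =>
    intro m hm
    haveI hs : Subsingleton (AddSubgroup (Fin 0 → ℤ)) := by
      constructor
      intro H K
      ext x
      have hx : x = 0 := Subsingleton.elim x 0
      subst hx
      exact iff_of_true H.zero_mem K.zero_mem
    haveI : Subsingleton (TriData 0 m) := by
      constructor
      intro a b
      exact Subtype.ext (Subsingleton.elim _ _)
    refine ⟨equivOfSubsingletonOfSubsingleton ?_ ?_⟩
    · intro H
      have h1 : m = 1 := by
        rw [← H.2, Subsingleton.elim H.1 (⊤ : AddSubgroup (Fin 0 → ℤ)),
          AddSubgroup.index_top]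
      exact ⟨fun i _ => i.elim0, fun i => i.elim0, fun i => i.elim0, by simp [h1]⟩
    · intro r
      refine ⟨⊤, ?_⟩
      rw [AddSubgroup.index_top, ← r.2.2.2]
      simp
  | succ n IH =>
    intro m hm
    set A := Fin n → ℤ with hA
    have e1 : {H : AddSubgroup (Fin (n+1) → ℤ) // H.index = m} ≃
        {H : AddSubgroup (ℤ × A) // H.index = m} := subgroupIndexEquiv (piSuccAddEquiv n) m
    have e2 : {H : AddSubgroup (ℤ × A) // H.index = m} ≃ SubData A m :=
      (Equiv.ofBijective _ (subOfData_bijective (A := A) hm)).symm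
    have e4 : MatData n m ≃ TriData (n + 1) m :=
      Equiv.ofBijective _ (triOfData_bijective (n := n) hm)
    have e3 : SubData A m ≃ MatData n m := by
      refine Equiv.sigmaCongrRight ?_
      rintro ⟨d, hd⟩
      have hdvd : d ∣ m := (Nat.mem_divisors.mp hd).1
      have hd0 : d ≠ 0 := fun h' => hm (Nat.eq_zero_of_zero_dvd (h' ▸ hdvd))
      have hk : m / d ≠ 0 :=
        (Nat.div_pos (Nat.le_of_dvd (Nat.pos_of_ne_zero hm) hdvd)
          (Nat.pos_of_ne_zero hd0)).ne'
      let e := (IH (m / d) hk).some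
      refine Equiv.sigmaCongr e ?_
      intro H₀
      haveI : H₀.1.FiniteIndex := ⟨by rw [H₀.2]; exact hk⟩
      refine Classical.choice (Finite.card_eq.mp ?_)
      have hc1 : Nat.card (A ⧸ H₀.1) = m / d := by
        rw [← AddSubgroup.index_eq_card, H₀.2]
      have hc2 : Nat.card (∀ i : Fin n, Fin ((e H₀).1 i i)) = m / d := by
        rw [Nat.card_pi]
        have := (e H₀).2.2.2
        simp only [Nat.card_eq_fintype_card, Fintype.card_fin]
        exact this
      rw [hc1, hc2]
    exact ⟨((e1.trans e2).trans e3).trans e4⟩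

/-- The number of sublattices (subgroups) of index `m` in `ℤ^n`. -/
noncomputable def sublatticeCount (n m : ℕ) : ℕ :=
  Nat.card {H : AddSubgroup (Fin n → ℤ) // H.index = m}

theorem sublattice_count_eq_card_triangular_matrices (n m : ℕ) (hm : 0 < m) :
    sublatticeCount n m =
      Nat.card {r : Fin n → Fin n → ℕ //
        (∀ i j, i < j → r i j = 0) ∧
        (∀ i j : Fin n, j < i → r i j < r i i) ∧
        ∏ i, r i i = m} := by
  obtain ⟨e⟩ := main_equiv n m hm.ne'
  exact Nat.card_congr e
end GroupSide2
end

section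
/- For a prime p and k ≥ 0, the number of subgroups of index p^k in ℤ^n equals the Gaussian binomial coefficient [n+k−1 choose k] evaluated at q = p. -/
open AddSubgroup

section Nsub
variable {A : Type*} [AddCommGroup A]

/-- The subgroup of `A × ℤ` generated by `H₀ × {0}` together with `(v, d)`. -/
def Nsub (H0 : AddSubgroup A) (d : ℤ) (v : A) : AddSubgroup (A × ℤ) where
  carrier := {x | ∃ m : ℤ, x.2 = m * d ∧ x.1 - m • v ∈ H0}
  zero_mem' := ⟨0, by simp, by simpa using H0.zero_mem⟩
  add_mem' := by
    rintro ⟨x, t⟩ ⟨y, s⟩ ⟨m, hm, hx⟩ ⟨m', hm', hy⟩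
    dsimp only at hm hm' hx hy ⊢
    refine ⟨m + m', ?_, ?_⟩
    · show t + s = _
      rw [hm, hm', add_mul]
    · show x + y - (m + m') • v ∈ H0
      have h : x + y - (m + m') • v = (x - m • v) + (y - m' • v) := by
        rw [add_smul]; abel
      rw [h]
      exact H0.add_mem hx hy
  neg_mem' := by
    rintro ⟨x, t⟩ ⟨m, hm, hx⟩
    dsimp only at hm hx ⊢
    refine ⟨-m, ?_, ?_⟩
    · show -t = _
      rw [hm]; ring
    · show -x - (-m) • v ∈ H0
      have h : -x - (-m) • v = -(x - m • v) := by
        rw [neg_smul]; abel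
      rw [h]
      exact H0.neg_mem hx

lemma mem_Nsub {H0 : AddSubgroup A} {d : ℤ} {v : A} {x : A × ℤ} :
    x ∈ Nsub H0 d v ↔ ∃ m : ℤ, x.2 = m * d ∧ x.1 - m • v ∈ H0 := Iff.rfl

lemma Nsub_le (H0 : AddSubgroup A) (d : ℤ) (v : A) :
    Nsub H0 d v ≤ (zmultiples d).comap (AddMonoidHom.snd A ℤ) := by
  rintro ⟨x, t⟩ ⟨m, hm, -⟩
  simp only [AddSubgroup.mem_comap, AddMonoidHom.coe_snd, Int.mem_zmultiples_iff]
  dsimp only at hm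
  rw [hm]
  exact dvd_mul_left d m

/-- The auxiliary homomorphism computing the relative index of `Nsub`. -/
noncomputable def psi (H0 : AddSubgroup A) (d : ℤ) (v : A) (hd : d ≠ 0) :
    ((zmultiples d).comap (AddMonoidHom.snd A ℤ)) →+ A ⧸ H0 where
  toFun s := QuotientAddGroup.mk (s.1.1 - (s.1.2 / d) • v)
  map_zero' := by simp
  map_add' s s' := by
    have hs : d ∣ (s : A × ℤ).2 := Int.mem_zmultiples_iff.mp s.2
    have hs' : d ∣ (s' : A × ℤ).2 := Int.mem_zmultiples_iff.mp s'.2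
    obtain ⟨a, ha⟩ := hs
    obtain ⟨b, hb⟩ := hs'
    have key : ((s : A × ℤ).2 + (s' : A × ℤ).2) / d
        = (s : A × ℤ).2 / d + (s' : A × ℤ).2 / d := by
      rw [ha, hb, ← mul_add, Int.mul_ediv_cancel_left _ hd, Int.mul_ediv_cancel_left _ hd,
        Int.mul_ediv_cancel_left _ hd]
    show QuotientAddGroup.mk (((s + s' : _) : A × ℤ).1 - ((((s + s' : _) : A × ℤ).2) / d) • v)
        = _
    rw [← QuotientAddGroup.mk_add]
    congr 1
    have hc : ((s + s' : _) : A × ℤ) = (s : A × ℤ) + (s' : A × ℤ) := rfl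
    rw [hc, Prod.fst_add, Prod.snd_add, key, add_smul]
    abel

lemma psi_surjective (H0 : AddSubgroup A) (d : ℤ) (v : A) (hd : d ≠ 0) :
    Function.Surjective (psi H0 d v hd) := by
  intro q
  obtain ⟨a, rfl⟩ := QuotientAddGroup.mk_surjective q
  refine ⟨⟨(a, 0), by
    simp only [AddSubgroup.mem_comap, AddMonoidHom.coe_snd]
    exact zero_mem _⟩, ?_⟩
  simp [psi]

lemma psi_ker (H0 : AddSubgroup A) (d : ℤ) (v : A) (hd : d ≠ 0) :
    (psi H0 d v hd).ker = (Nsub H0 d v).addSubgroupOf _ := by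
  ext s
  have hdvd : d ∣ (s : A × ℤ).2 := Int.mem_zmultiples_iff.mp s.2
  simp only [AddMonoidHom.mem_ker, psi, AddMonoidHom.coe_mk, ZeroHom.coe_mk,
    QuotientAddGroup.eq_zero_iff, AddSubgroup.mem_addSubgroupOf, mem_Nsub]
  constructor
  · intro h
    exact ⟨(s : A × ℤ).2 / d, (Int.ediv_mul_cancel hdvd).symm, h⟩
  · rintro ⟨m, hm, h⟩
    have : (s : A × ℤ).2 / d = m := by rw [hm, Int.mul_ediv_cancel _ hd]
    rwa [this]

lemma Nsub_index (H0 : AddSubgroup A) (d : ℤ) (v : A) (hd : d ≠ 0) :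
    (Nsub H0 d v).index = H0.index * d.natAbs := by
  rw [← relIndex_mul_index (Nsub_le H0 d v), index_comap_of_surjective _ Prod.snd_surjective,
    Int.index_zmultiples]
  congr 1
  rw [relIndex, ← psi_ker H0 d v hd, index_ker]
  have hr : (psi H0 d v hd).range = ⊤ :=
    AddMonoidHom.range_eq_top_of_surjective _ (psi_surjective H0 d v hd)
  rw [hr, index_eq_card]
  exact Nat.card_congr AddSubgroup.topEquiv.toEquiv

end Nsub
section Nsub2
variable {A : Type*} [AddCommGroup A]

lemma Nsub_congr {H0 : AddSubgroup A} {d : ℤ} {v v' : A} (h : v - v' ∈ H0) :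
    Nsub H0 d v = Nsub H0 d v' := by
  ext ⟨x, t⟩
  simp only [mem_Nsub]
  constructor
  · rintro ⟨m, hm, hx⟩
    refine ⟨m, hm, ?_⟩
    have he : x - m • v' = (x - m • v) + m • (v - v') := by
      rw [smul_sub]; abel
    rw [he]
    exact H0.add_mem hx (zsmul_mem h m)
  · rintro ⟨m, hm, hx⟩
    refine ⟨m, hm, ?_⟩
    have he : x - m • v = (x - m • v') - m • (v - v') := by
      rw [smul_sub]; abel
    rw [he]
    exact H0.sub_mem hx (zsmul_mem h m)

lemma fst_zero_mem_Nsub {H0 : AddSubgroup A} {d : ℤ} {v : A} (hd : d ≠ 0) {x : A} :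
    (x, (0 : ℤ)) ∈ Nsub H0 d v ↔ x ∈ H0 := by
  simp only [mem_Nsub]
  constructor
  · rintro ⟨m, hm, hx⟩
    have hm0 : m = 0 := by
      rcases mul_eq_zero.mp hm.symm with h | h
      · exact h
      · exact absurd h hd
    simpa [hm0] using hx
  · intro hx
    exact ⟨0, by simp, by simpa using hx⟩

lemma vd_mem_Nsub (H0 : AddSubgroup A) (d : ℤ) (v : A) : (v, d) ∈ Nsub H0 d v :=
  ⟨1, by simp, by simpa using H0.zero_mem⟩

lemma snd_map_Nsub {H0 : AddSubgroup A} {d : ℤ} {v : A} {x : A × ℤ}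
    (hx : x ∈ Nsub H0 d v) : d ∣ x.2 := by
  obtain ⟨m, hm, -⟩ := hx
  exact hm ▸ dvd_mul_left d m

/-- Uniqueness part of the classification. -/
lemma Nsub_inj {H0 H0' : AddSubgroup A} {d d' : ℤ} {v v' : A}
    (hd : 0 < d) (hd' : 0 < d')
    (h : Nsub H0 d v = Nsub H0' d' v') : H0 = H0' ∧ d = d' ∧ v - v' ∈ H0' := by
  have hH : H0 = H0' := by
    ext x
    rw [← fst_zero_mem_Nsub hd.ne' (x := x), h, fst_zero_mem_Nsub hd'.ne']
  have hdd : d = d' := by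
    have h1 : d' ∣ d := snd_map_Nsub (h ▸ vd_mem_Nsub H0 d v)
    have h2 : d ∣ d' := snd_map_Nsub (h.symm ▸ vd_mem_Nsub H0' d' v')
    exact Int.dvd_antisymm hd.le hd'.le h2 h1
  refine ⟨hH, hdd, ?_⟩
  have hv : (v, d) ∈ Nsub H0' d' v' := h ▸ vd_mem_Nsub H0 d v
  obtain ⟨m, hm, hx⟩ := hv
  have hm1 : m = 1 := by
    dsimp only at hm
    rw [hdd] at hm
    have := mul_right_cancel₀ hd'.ne' (hm.symm.trans (one_mul d').symm)
    exact this
  rw [hm1] at hx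
  simpa using hx

/-- Existence part of the classification: every finite-index subgroup of `A × ℤ`
has the form `Nsub H0 d v` with `d > 0`. -/
lemma exists_Nsub (H : AddSubgroup (A × ℤ)) (hH : H.index ≠ 0) :
    ∃ (H0 : AddSubgroup A) (d : ℤ) (v : A), 0 < d ∧ H = Nsub H0 d v := by
  obtain ⟨a, ha⟩ := Int.subgroup_cyclic (H.map (AddMonoidHom.snd A ℤ))
  rw [← AddSubgroup.zmultiples_eq_closure] at ha
  -- replace `a` by its absolute value
  have ha' : H.map (AddMonoidHom.snd A ℤ) = AddSubgroup.zmultiples ((a.natAbs : ℤ)) := by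
    rw [ha]; ext b; simp only [Int.mem_zmultiples_iff, Int.natAbs_dvd]
  set d : ℤ := (a.natAbs : ℤ) with hdd
  have hle : H ≤ (AddSubgroup.zmultiples d).comap (AddMonoidHom.snd A ℤ) := by
    intro x hx
    simp only [AddSubgroup.mem_comap, AddMonoidHom.coe_snd]
    rw [← ha']
    exact AddSubgroup.mem_map_of_mem _ hx
  have hd0 : d ≠ 0 := by
    intro h0
    apply hH
    have : ((AddSubgroup.zmultiples d).comap (AddMonoidHom.snd A ℤ)).index = 0 := by
      rw [AddSubgroup.index_comap_of_surjective _ Prod.snd_surjective, Int.index_zmultiples,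
        h0]
      simp
    have hdvd := AddSubgroup.index_dvd_of_le hle
    rw [this] at hdvd
    exact zero_dvd_iff.mp hdvd
  have hdpos : 0 < d := by
    rcases lt_or_eq_of_le (Int.natCast_nonneg a.natAbs) with h | h
    · exact h
    · exact absurd h.symm hd0
  -- pick `v` with `(v, d) ∈ H`
  have hdm : d ∈ H.map (AddMonoidHom.snd A ℤ) := by
    rw [ha']
    exact AddSubgroup.mem_zmultiples _
  obtain ⟨⟨v, t⟩, hvH, hvt⟩ := hdm
  have hvt' : t = d := hvt
  subst hvt'
  refine ⟨H.comap (AddMonoidHom.inl A ℤ), d, v, hdpos, ?_⟩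
  ext ⟨x, t⟩
  constructor
  · intro hx
    have ht : d ∣ t := by
      have := hle hx
      simpa only [AddSubgroup.mem_comap, AddMonoidHom.coe_snd, Int.mem_zmultiples_iff] using this
    obtain ⟨m, hm⟩ := ht
    rw [mul_comm] at hm
    refine ⟨m, hm, ?_⟩
    simp only [AddSubgroup.mem_comap, AddMonoidHom.inl_apply]
    have hsub : ((x, t) - m • (v, d) : A × ℤ) ∈ H := H.sub_mem hx (zsmul_mem hvH m)
    have he : ((x, t) - m • (v, d) : A × ℤ) = (x - m • v, 0) := by
      rw [Prod.smul_mk, Prod.mk_sub_mk]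
      congr 1
      rw [hm, smul_eq_mul, sub_self]
    rwa [he] at hsub
  · rintro ⟨m, hm, hx⟩
    dsimp only at hm
    simp only [AddSubgroup.mem_comap, AddMonoidHom.inl_apply] at hx
    have hsum : ((x - m • v, 0) + m • (v, d) : A × ℤ) ∈ H := H.add_mem hx (zsmul_mem hvH m)
    have he : ((x - m • v, 0) + m • (v, d) : A × ℤ) = (x, t) := by
      rw [Prod.smul_mk, Prod.mk_add_mk, Prod.mk.injEq]
      exact ⟨by abel, by rw [hm, smul_eq_mul, zero_add]⟩
    rwa [he] at hsum

end Nsub2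
section Key
variable {A : Type*} [AddCommGroup A]

variable (A) in
/-- Parameter space for finite-index subgroups of `A × ℤ` of index `p ^ k`. -/
abbrev SigT (p k : ℕ) : Type _ :=
  Σ i : Fin (k + 1), Σ H0 : {H0 : AddSubgroup A // H0.index = p ^ (i : ℕ)}, A ⧸ (H0.1)

/-- The classification map. -/
noncomputable def keyFun (p k : ℕ) (hp : p.Prime) :
    SigT A p k → {H : AddSubgroup (A × ℤ) // H.index = p ^ k} := fun x =>
  ⟨Nsub x.2.1.1 ((p : ℤ) ^ (k - (x.1 : ℕ))) x.2.2.out, by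
    have hpz : ((p : ℤ) ^ (k - (x.1 : ℕ))) ≠ 0 :=
      pow_ne_zero _ (Int.natCast_ne_zero.mpr hp.pos.ne')
    rw [Nsub_index _ _ _ hpz, x.2.1.2, Int.natAbs_pow, Int.natAbs_natCast, ← pow_add,
      Nat.add_sub_cancel' (Nat.lt_succ_iff.mp x.1.isLt)]⟩

lemma keyFun_bijective (p k : ℕ) (hp : p.Prime) :
    Function.Bijective (keyFun (A := A) p k hp) := by
  have hppos : (0 : ℤ) < (p : ℤ) := Int.natCast_pos.mpr hp.pos
  constructor
  · rintro ⟨i, ⟨H0, hH0⟩, v⟩ ⟨j, ⟨H1, hH1⟩, w⟩ h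
    have h' : Nsub H0 ((p : ℤ) ^ (k - (i : ℕ))) v.out
        = Nsub H1 ((p : ℤ) ^ (k - (j : ℕ))) w.out := congrArg Subtype.val h
    obtain ⟨hsub, hd, hv⟩ := Nsub_inj (pow_pos hppos _) (pow_pos hppos _) h'
    have hij : i = j := by
      have : k - (i : ℕ) = k - (j : ℕ) := by
        have h2 : (p : ℕ) ^ (k - (i : ℕ)) = (p : ℕ) ^ (k - (j : ℕ)) := by
          have h3 : ((p ^ (k - (i : ℕ)) : ℕ) : ℤ) = ((p ^ (k - (j : ℕ)) : ℕ) : ℤ) := by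
            push_cast
            exact hd
          exact_mod_cast h3
        exact Nat.pow_right_injective hp.two_le h2
      have hi := Nat.lt_succ_iff.mp i.isLt
      have hj := Nat.lt_succ_iff.mp j.isLt
      exact Fin.ext (by omega)
    subst hij
    have hsub' : H0 = H1 := hsub
    subst hsub'
    have hvw : v = w := by
      rw [← QuotientAddGroup.out_eq' v, ← QuotientAddGroup.out_eq' w]
      apply (QuotientAddGroup.eq (s := H0)).mpr
      have : -(v.out) + w.out = -(v.out - w.out) + 0 := by abel
      rw [this, add_zero]
      exact H0.neg_mem hv
    subst hvw
    rfl
  · rintro ⟨H, hH⟩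
    have hpk : H.index ≠ 0 := by rw [hH]; exact pow_ne_zero _ hp.pos.ne'
    obtain ⟨H0, d, v, hdpos, rfl⟩ := exists_Nsub H hpk
    have hidx : H0.index * d.natAbs = p ^ k := by
      rw [← Nsub_index _ _ _ hdpos.ne', hH]
    have hdvd : d.natAbs ∣ p ^ k := Dvd.intro_left _ hidx
    obtain ⟨j, hj, hdj⟩ := (Nat.dvd_prime_pow hp).mp hdvd
    have hH0idx : H0.index = p ^ (k - j) := by
      have h1 : H0.index * p ^ j = p ^ (k - j) * p ^ j := by
        calc H0.index * p ^ j = H0.index * d.natAbs := by rw [hdj]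
          _ = p ^ k := hidx
          _ = p ^ (k - j) * p ^ j := by rw [← pow_add, Nat.sub_add_cancel hj]
      exact Nat.eq_of_mul_eq_mul_right (Nat.pow_pos hp.pos) h1
    have hdval : d = (p : ℤ) ^ j := by
      have := Int.natAbs_of_nonneg hdpos.le
      rw [← this, hdj]
      push_cast
      ring
    have hklt : k - j < k + 1 := Nat.lt_succ_of_le (Nat.sub_le _ _)
    refine ⟨⟨⟨k - j, hklt⟩, ⟨H0, hH0idx⟩, QuotientAddGroup.mk v⟩, ?_⟩
    apply Subtype.ext
    show Nsub H0 ((p : ℤ) ^ (k - (k - j))) (QuotientAddGroup.mk (s := H0) v).out = Nsub H0 d v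
    rw [Nat.sub_sub_self hj, ← hdval]
    apply Nsub_congr
    have h2 : -((QuotientAddGroup.mk (s := H0) v).out) + v ∈ H0 :=
      (QuotientAddGroup.eq (s := H0)).mp (QuotientAddGroup.out_eq' _)
    have h3 : (QuotientAddGroup.mk (s := H0) v).out - v
        = -(-((QuotientAddGroup.mk (s := H0) v).out) + v) := by abel
    rw [h3]
    exact H0.neg_mem h2

end Key
section Count
variable {A B : Type*} [AddCommGroup A] [AddCommGroup B]

/-- Transfer of the set of index-`m` subgroups along an additive equivalence. -/
noncomputable def indexSubgroupEquiv (e : A ≃+ B) (m : ℕ) :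
    {H : AddSubgroup A // H.index = m} ≃ {H : AddSubgroup B // H.index = m} where
  toFun H := ⟨H.1.comap e.symm.toAddMonoidHom, by
    rw [AddSubgroup.index_comap_of_surjective _ e.symm.surjective]; exact H.2⟩
  invFun H := ⟨H.1.comap e.toAddMonoidHom, by
    rw [AddSubgroup.index_comap_of_surjective _ e.surjective]; exact H.2⟩
  left_inv H := by
    apply Subtype.ext
    ext x
    simp [AddSubgroup.mem_comap]
  right_inv H := by
    apply Subtype.ext
    ext x
    simp [AddSubgroup.mem_comap]

lemma int_subgroup_eq (H : AddSubgroup ℤ) {m : ℕ} (hm : m ≠ 0) (hH : H.index = m) :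
    H = AddSubgroup.zmultiples (m : ℤ) := by
  obtain ⟨a, ha⟩ := Int.subgroup_cyclic H
  rw [← AddSubgroup.zmultiples_eq_closure] at ha
  have h1 : a.natAbs = m := by
    rw [ha, Int.index_zmultiples] at hH
    exact hH
  rw [ha]
  ext b
  simp only [Int.mem_zmultiples_iff]
  rw [← h1, Int.natAbs_dvd]

lemma int_count (m : ℕ) (hm : m ≠ 0) :
    Nat.card {H : AddSubgroup ℤ // H.index = m} = 1 := by
  haveI hs : Subsingleton {H : AddSubgroup ℤ // H.index = m} :=
    ⟨fun a b => Subtype.ext (by rw [int_subgroup_eq a.1 hm a.2, int_subgroup_eq b.1 hm b.2])⟩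
  haveI hn : Nonempty {H : AddSubgroup ℤ // H.index = m} :=
    ⟨⟨AddSubgroup.zmultiples (m : ℤ), by rw [Int.index_zmultiples]; simp⟩⟩
  exact Nat.card_unique

lemma card_SigT (p k : ℕ) (hp : p.Prime)
    (hfin : ∀ i : ℕ, Finite {H0 : AddSubgroup A // H0.index = p ^ i}) :
    Nat.card (SigT A p k)
      = ∑ i ∈ Finset.range (k + 1),
          Nat.card {H0 : AddSubgroup A // H0.index = p ^ i} * p ^ i := by
  letI F1 : ∀ i : Fin (k + 1), Fintype {H0 : AddSubgroup A // H0.index = p ^ (i : ℕ)} :=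
    fun i => @Fintype.ofFinite _ (hfin i)
  letI F2 : ∀ (i : Fin (k + 1)) (H0 : {H0 : AddSubgroup A // H0.index = p ^ (i : ℕ)}),
      Fintype (A ⧸ H0.1) := fun i H0 => @Fintype.ofFinite _ <|
    Nat.finite_of_card_ne_zero (by
      rw [← AddSubgroup.index_eq_card, H0.2]; exact pow_ne_zero _ hp.pos.ne')
  rw [Nat.card_eq_fintype_card, Fintype.card_sigma,
    ← Fin.sum_univ_eq_sum_range
      (fun i => Nat.card {H0 : AddSubgroup A // H0.index = p ^ i} * p ^ i)]
  apply Finset.sum_congr rfl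
  intro i _
  rw [Fintype.card_sigma]
  have hq : ∀ H0 : {H0 : AddSubgroup A // H0.index = p ^ (i : ℕ)},
      Fintype.card (A ⧸ H0.1) = p ^ (i : ℕ) := fun H0 => by
    rw [← Nat.card_eq_fintype_card, ← AddSubgroup.index_eq_card, H0.2]
  calc (∑ H0 : {H0 : AddSubgroup A // H0.index = p ^ (i : ℕ)}, Fintype.card (A ⧸ H0.1))
      = ∑ _H0 : {H0 : AddSubgroup A // H0.index = p ^ (i : ℕ)}, p ^ (i : ℕ) :=
        Finset.sum_congr rfl (fun H0 _ => hq H0)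
    _ = _ := by
        rw [Finset.sum_const, Finset.card_univ, smul_eq_mul, Nat.card_eq_fintype_card]

lemma finite_SigT (p k : ℕ) (hp : p.Prime)
    (hfin : ∀ i : ℕ, Finite {H0 : AddSubgroup A // H0.index = p ^ i}) :
    Finite (SigT A p k) := by
  haveI h1 : ∀ i : Fin (k + 1), Finite {H0 : AddSubgroup A // H0.index = p ^ (i : ℕ)} :=
    fun i => hfin i
  haveI h2 : ∀ (i : Fin (k + 1)) (H0 : {H0 : AddSubgroup A // H0.index = p ^ (i : ℕ)}),
      Finite (A ⧸ H0.1) := fun i H0 =>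
    Nat.finite_of_card_ne_zero (by
      rw [← AddSubgroup.index_eq_card, H0.2]; exact pow_ne_zero _ hp.pos.ne')
  infer_instance

/-- Key recursion for the number of subgroups of prime-power index. -/
lemma card_prod (p k : ℕ) (hp : p.Prime)
    (hfin : ∀ i : ℕ, Finite {H0 : AddSubgroup A // H0.index = p ^ i}) :
    Nat.card {H : AddSubgroup (A × ℤ) // H.index = p ^ k}
      = ∑ i ∈ Finset.range (k + 1),
          Nat.card {H0 : AddSubgroup A // H0.index = p ^ i} * p ^ i := by
  rw [← Nat.card_congr (Equiv.ofBijective _ (keyFun_bijective (A := A) p k hp))]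
  exact card_SigT p k hp hfin

lemma finite_prod (p k : ℕ) (hp : p.Prime)
    (hfin : ∀ i : ℕ, Finite {H0 : AddSubgroup A // H0.index = p ^ i}) :
    Finite {H : AddSubgroup (A × ℤ) // H.index = p ^ k} := by
  haveI := finite_SigT (A := A) p k hp hfin
  exact Finite.of_surjective _ (keyFun_bijective (A := A) p k hp).surjective

end Count
section Lattice

/-- `ℤ^(n+1) ≃+ ℤ^n × ℤ`. -/
def eSucc (n : ℕ) : (Fin (n + 1) → ℤ) ≃+ (Fin n → ℤ) × ℤ :=
  { (Fin.consEquiv (fun _ => ℤ)).symm.trans (Equiv.prodComm ℤ (Fin n → ℤ)) with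
    map_add' := fun f g => rfl }

/-- `ℤ^1 ≃+ ℤ`. -/
def eOne : (Fin 1 → ℤ) ≃+ ℤ :=
  { Equiv.funUnique (Fin 1) ℤ with
    map_add' := fun f g => rfl }

lemma finite_lattice (p : ℕ) (hp : p.Prime) (n : ℕ) :
    ∀ k, Finite {H : AddSubgroup (Fin (n + 1) → ℤ) // H.index = p ^ k} := by
  induction n with
  | zero =>
    intro k
    haveI : Subsingleton {H : AddSubgroup ℤ // H.index = p ^ k} :=
      ⟨fun a b => Subtype.ext (by
        rw [int_subgroup_eq a.1 (pow_ne_zero _ hp.pos.ne') a.2,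
          int_subgroup_eq b.1 (pow_ne_zero _ hp.pos.ne') b.2])⟩
    exact Finite.of_equiv _ (indexSubgroupEquiv eOne (p ^ k)).symm
  | succ n ih =>
    intro k
    haveI := finite_prod (A := Fin (n + 1) → ℤ) p k hp ih
    exact Finite.of_equiv _ (indexSubgroupEquiv (eSucc (n + 1)) (p ^ k)).symm

lemma count_base (p k : ℕ) (hp : p.Prime) :
    Nat.card {H : AddSubgroup (Fin 1 → ℤ) // H.index = p ^ k} = 1 := by
  rw [Nat.card_congr (indexSubgroupEquiv eOne (p ^ k))]
  exact int_count _ (pow_ne_zero _ hp.pos.ne')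

lemma count_step (p k n : ℕ) (hp : p.Prime) :
    Nat.card {H : AddSubgroup (Fin (n + 2) → ℤ) // H.index = p ^ k}
      = ∑ i ∈ Finset.range (k + 1),
          Nat.card {H0 : AddSubgroup (Fin (n + 1) → ℤ) // H0.index = p ^ i} * p ^ i := by
  rw [Nat.card_congr (indexSubgroupEquiv (eSucc (n + 1)) (p ^ k))]
  exact card_prod p k hp (finite_lattice p hp n)

end Lattice
section Analytic
open Finset

/-- Denominator product `∏ (1 - p^(i+1))`. -/
def Dk (p k : ℕ) : ℚ := ∏ i ∈ Finset.range k, (1 - (p : ℚ) ^ (i + 1))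

/-- Numerator product `∏ (1 - p^(m+1+i))`. -/
def Nmk (p m k : ℕ) : ℚ := ∏ i ∈ Finset.range k, (1 - (p : ℚ) ^ (m + 1 + i))

lemma one_lt_cast_pow {p : ℕ} (hp : 2 ≤ p) {j : ℕ} (hj : j ≠ 0) : (1 : ℚ) < (p : ℚ) ^ j :=
  one_lt_pow₀ (by exact_mod_cast hp) hj

lemma Dk_ne_zero {p : ℕ} (hp : 2 ≤ p) (k : ℕ) : Dk p k ≠ 0 := by
  refine Finset.prod_ne_zero_iff.mpr fun i _ => ?_
  have h := one_lt_cast_pow hp (Nat.succ_ne_zero i)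
  exact sub_ne_zero_of_ne h.ne

lemma gauss_sum {p : ℕ} (hp : 2 ≤ p) (m k : ℕ) :
    ∑ i ∈ Finset.range (k + 1), (p : ℚ) ^ i * (Nmk p m i / Dk p i)
      = Nmk p (m + 1) k / Dk p k := by
  induction k with
  | zero => simp [Nmk, Dk]
  | succ k ih =>
    rw [Finset.sum_range_succ, ih]
    have hD : Dk p (k + 1) = Dk p k * (1 - (p : ℚ) ^ (k + 1)) := Finset.prod_range_succ _ _
    have hN : Nmk p (m + 1) (k + 1) = Nmk p (m + 1) k * (1 - (p : ℚ) ^ (m + 1 + 1 + k)) :=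
      Finset.prod_range_succ _ _
    have hshift : Nmk p m (k + 1) = (1 - (p : ℚ) ^ (m + 1)) * Nmk p (m + 1) k := by
      rw [Nmk, Finset.prod_range_succ']
      have e1 : ∀ i ∈ Finset.range k,
          (1 - (p : ℚ) ^ (m + 1 + (i + 1))) = (1 - (p : ℚ) ^ (m + 1 + 1 + i)) := by
        intro i _
        congr 2
        omega
      rw [Finset.prod_congr rfl e1]
      exact mul_comm _ _
    have hD0 : Dk p k ≠ 0 := Dk_ne_zero hp k
    have h1 : (1 : ℚ) - (p : ℚ) ^ (k + 1) ≠ 0 :=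
      sub_ne_zero_of_ne (one_lt_cast_pow hp (Nat.succ_ne_zero k)).ne
    rw [hD, hN, hshift]
    field_simp
    ring
end Analytic

section Assembly
open Finset

lemma lattice_count_eq (p : ℕ) (hp : p.Prime) (m k : ℕ) :
    (sublatticeCount (m + 1) (p ^ k) : ℚ) = Nmk p m k / Dk p k := by
  induction m generalizing k with
  | zero =>
    show ((Nat.card {H : AddSubgroup (Fin 1 → ℤ) // H.index = p ^ k} : ℕ) : ℚ) = _
    rw [count_base p k hp]
    have : Nmk p 0 k = Dk p k := by
      apply Finset.prod_congr rfl
      intro i _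
      congr 2
      omega
    rw [this, div_self (Dk_ne_zero hp.two_le k)]
    norm_num
  | succ m ih =>
    show ((Nat.card {H : AddSubgroup (Fin (m + 2) → ℤ) // H.index = p ^ k} : ℕ) : ℚ) = _
    rw [count_step p k m hp]
    push_cast
    have : ∀ i ∈ Finset.range (k + 1),
        ((Nat.card {H0 : AddSubgroup (Fin (m + 1) → ℤ) // H0.index = p ^ i} : ℕ) : ℚ) * (p : ℚ) ^ i
          = (p : ℚ) ^ i * (Nmk p m i / Dk p i) := by
      intro i _
      rw [show ((Nat.card {H0 : AddSubgroup (Fin (m + 1) → ℤ) // H0.index = p ^ i} : ℕ) : ℚ)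
          = (sublatticeCount (m + 1) (p ^ i) : ℚ) from rfl, ih i, mul_comm]
    rw [Finset.sum_congr rfl this, gauss_sum hp.two_le]

end Assembly

theorem sublattice_count_prime_pow_eq_gaussBinomial (n k p : ℕ)
    (hn : 1 ≤ n) (hp : p.Prime) :
    (sublatticeCount n (p ^ k) : ℚ) =
      ∏ i ∈ Finset.Icc 1 k, (1 - (p : ℚ) ^ (n - 1 + i)) / (1 - (p : ℚ) ^ i) := by
  obtain ⟨m, rfl⟩ : ∃ m, n = m + 1 := ⟨n - 1, by omega⟩
  rw [lattice_count_eq p hp m k]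
  rw [Finset.prod_div_distrib]
  congr 1
  · rw [← Finset.Ico_add_one_right_eq_Icc, Finset.prod_Ico_eq_prod_range]
    apply Finset.prod_congr (by norm_num)
    intro i _
    congr 2
    omega
  · rw [← Finset.Ico_add_one_right_eq_Icc, Finset.prod_Ico_eq_prod_range]
    apply Finset.prod_congr (by norm_num)
    intro i _
    congr 2
    omega
end

section
/- For n = 3, the number of sublattices of index m in ℤ³ equals Σ_{d ∣ m} d·σ(d), where σ is the sum-of-divisors function. -/
open AddSubgroup

/- ### Auxiliary lemmas -/

lemma SL.nat_card_sigma {ι : Type*} [Fintype ι] (f : ι → Type*) [∀ i, Finite (f i)] :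
    Nat.card (Σ i, f i) = ∑ i, Nat.card (f i) := by
  letI : ∀ i, Fintype (f i) := fun i => Fintype.ofFinite (f i)
  classical
  simp [Nat.card_eq_fintype_card, Fintype.card_sigma]

lemma SL.zmultiples_neg' (a : ℤ) : zmultiples (-a) = zmultiples a := by
  ext x
  simp only [mem_zmultiples_iff]
  constructor <;> rintro ⟨k, rfl⟩ <;> exact ⟨-k, by simp⟩

lemma SL.zmultiples_natAbs (a : ℤ) :
    zmultiples ((a.natAbs : ℤ)) = zmultiples a := by
  rcases Int.natAbs_eq a with h | h
  · rw [← h]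
  · conv_rhs => rw [h]
    rw [SL.zmultiples_neg']

/-- Every subgroup of `ℤ` is the multiples of its index. -/
lemma SL.int_addSubgroup_eq (H : AddSubgroup ℤ) : H = zmultiples ((H.index : ℤ)) := by
  obtain ⟨a, ha⟩ := Int.subgroup_cyclic H
  rw [← AddSubgroup.zmultiples_eq_closure] at ha
  rw [ha, Int.index_zmultiples, SL.zmultiples_natAbs]

lemma SL.int_base (m : ℕ) (hm : 0 < m) :
    Nat.card {H : AddSubgroup ℤ // H.index = m} = 1 := by
  rw [Nat.card_eq_one_iff_unique]
  constructor
  · constructor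
    rintro ⟨H, hH⟩ ⟨H', hH'⟩
    apply Subtype.ext
    show H = H'
    rw [SL.int_addSubgroup_eq H, SL.int_addSubgroup_eq H', hH, hH']
  · exact ⟨⟨zmultiples ((m : ℤ)), by rw [Int.index_zmultiples, Int.natAbs_natCast]⟩⟩

instance SL.int_base_finite (m : ℕ) : Finite {H : AddSubgroup ℤ // H.index = m} := by
  have : Subsingleton {H : AddSubgroup ℤ // H.index = m} := by
    constructor
    rintro ⟨H, hH⟩ ⟨H', hH'⟩
    apply Subtype.ext
    show H = H'
    rw [SL.int_addSubgroup_eq H, SL.int_addSubgroup_eq H', hH, hH']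
  exact Finite.of_subsingleton

section Step

variable {B : Type} [AddCommGroup B]

/-- Projection of a subgroup of `ℤ × B` to the first factor. -/
def SL.projZ (H : AddSubgroup (ℤ × B)) : AddSubgroup ℤ := H.map (AddMonoidHom.fst ℤ B)

/-- The slice `{b | (0, b) ∈ H}`. -/
def SL.sliceB (H : AddSubgroup (ℤ × B)) : AddSubgroup B := H.comap (AddMonoidHom.inr ℤ B)

lemma SL.mem_projZ {H : AddSubgroup (ℤ × B)} {x : ℤ} :
    x ∈ SL.projZ H ↔ ∃ b, (x, b) ∈ H := by
  constructor
  · rintro ⟨⟨y, b⟩, hp, rfl⟩; exact ⟨b, hp⟩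
  · rintro ⟨b, hb⟩; exact ⟨(x, b), hb, rfl⟩

lemma SL.mem_sliceB {H : AddSubgroup (ℤ × B)} {b : B} :
    b ∈ SL.sliceB H ↔ ((0 : ℤ), b) ∈ H := Iff.rfl

/-- The key index factorization. -/
lemma SL.index_eq_mul (H : AddSubgroup (ℤ × B)) :
    H.index = (SL.projZ H).index * (SL.sliceB H).index := by
  set K := SL.projZ H with hK
  set L := SL.sliceB H with hL
  set T : AddSubgroup (ℤ × B) := K.prod ⊤ with hT
  have hle : H ≤ T := by
    rintro ⟨x, b⟩ hp
    exact ⟨⟨(x, b), hp, rfl⟩, trivial⟩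
  have h1 : H.relIndex T * T.index = H.index := relIndex_mul_index hle
  have hTi : T.index = K.index := by rw [hT, AddSubgroup.index_prod, index_top, mul_one]
  -- compute the relative index
  have hmem : ∀ b : B, ((0 : ℤ), b) ∈ T := fun b => ⟨K.zero_mem, trivial⟩
  set g : B →+ T := (AddMonoidHom.inr ℤ B).codRestrict T (fun b => hmem b) with hg
  set ψ : B →+ T ⧸ (H.addSubgroupOf T) := (QuotientAddGroup.mk' _).comp g with hψ
  have hsurj : Function.Surjective ψ := by
    intro x
    induction x using QuotientAddGroup.induction_on with
    | H p =>
      obtain ⟨⟨x, b⟩, hmemT⟩ := p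
      obtain ⟨b₀, hb₀⟩ : ∃ b₀, (x, b₀) ∈ H := SL.mem_projZ.mp hmemT.1
      refine ⟨b - b₀, ?_⟩
      have : ψ (b - b₀) = QuotientAddGroup.mk (g (b - b₀)) := rfl
      rw [this]
      rw [QuotientAddGroup.eq]
      rw [AddSubgroup.mem_addSubgroupOf]
      have : ((-(g (b - b₀)) + ⟨(x, b), hmemT⟩ : T) : ℤ × B) = (x, b₀) := by
        simp [hg, Prod.ext_iff]
        change (0 : ℤ) - 0 = 0 ∧ b₀ - b + b = b₀
        exact ⟨sub_self 0, sub_add_cancel b₀ b⟩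
      rw [this]
      exact hb₀
  have hker : ψ.ker = L := by
    ext b
    rw [hψ, AddMonoidHom.mem_ker, AddMonoidHom.comp_apply, QuotientAddGroup.mk'_apply,
      QuotientAddGroup.eq_zero_iff, AddSubgroup.mem_addSubgroupOf]
    rfl
  have hrel : H.relIndex T = L.index := by
    have e1 := QuotientAddGroup.quotientKerEquivOfSurjective ψ hsurj
    have : (H.addSubgroupOf T).index = Nat.card (T ⧸ H.addSubgroupOf T) := index_eq_card _
    rw [AddSubgroup.relIndex, this, ← Nat.card_congr e1.toEquiv, hker, index_eq_card]
  rw [← h1, hTi, hrel, mul_comm]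

variable (B) in
/-- The subgroup of `ℤ × B` built from `(a, L, q)`. -/
def SL.mkH (a : ℕ) (L : AddSubgroup B) (q : B ⧸ L) : AddSubgroup (ℤ × B) where
  carrier := {p | ∃ k : ℤ, p.1 = k * a ∧ (p.2 : B ⧸ L) = k • q}
  zero_mem' := ⟨0, by simp⟩
  add_mem' := by
    rintro p p' ⟨k, h1, h2⟩ ⟨k', h1', h2'⟩
    refine ⟨k + k', ?_, ?_⟩
    · simp only [Prod.fst_add, h1, h1']; ring
    · show ((p.2 + p'.2 : B) : B ⧸ L) = _
      rw [QuotientAddGroup.mk_add, h2, h2', add_zsmul]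
  neg_mem' := by
    rintro p ⟨k, h1, h2⟩
    refine ⟨-k, ?_, ?_⟩
    · simp only [Prod.fst_neg, h1]; ring
    · show ((-p.2 : B) : B ⧸ L) = _
      rw [QuotientAddGroup.mk_neg, h2, neg_zsmul]

lemma SL.mem_mkH {a : ℕ} {L : AddSubgroup B} {q : B ⧸ L} {p : ℤ × B} :
    p ∈ SL.mkH B a L q ↔ ∃ k : ℤ, p.1 = k * a ∧ (p.2 : B ⧸ L) = k • q := Iff.rfl

lemma SL.projZ_mkH (a : ℕ) (L : AddSubgroup B) (q : B ⧸ L) :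
    SL.projZ (SL.mkH B a L q) = zmultiples ((a : ℤ)) := by
  ext x
  rw [SL.mem_projZ, mem_zmultiples_iff]
  constructor
  · rintro ⟨b, k, h1, h2⟩
    exact ⟨k, by rw [smul_eq_mul, ← h1]⟩
  · rintro ⟨k, hk⟩
    obtain ⟨b, hb⟩ := QuotientAddGroup.mk_surjective (k • q)
    exact ⟨b, k, by rw [← hk, smul_eq_mul], hb⟩

lemma SL.sliceB_mkH {a : ℕ} (ha : a ≠ 0) (L : AddSubgroup B) (q : B ⧸ L) :
    SL.sliceB (SL.mkH B a L q) = L := by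
  ext b
  rw [SL.mem_sliceB, SL.mem_mkH]
  constructor
  · rintro ⟨k, h1, h2⟩
    have hk : k = 0 := by
      have : (a : ℤ) ≠ 0 := Int.natCast_ne_zero.mpr ha
      have := h1.symm
      rcases mul_eq_zero.mp this with h | h
      · exact h
      · exact absurd h ‹(a : ℤ) ≠ 0›
    rw [hk, zero_zsmul] at h2
    exact (QuotientAddGroup.eq_zero_iff b).mp h2
  · intro hb
    exact ⟨0, by simp, by rw [zero_zsmul]; exact (QuotientAddGroup.eq_zero_iff b).mpr hb⟩

lemma SL.q_mkH {a : ℕ} (ha : a ≠ 0) {L : AddSubgroup B} {q : B ⧸ L} {b₀ : B}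
    (h : ((a : ℤ), b₀) ∈ SL.mkH B a L q) : (b₀ : B ⧸ L) = q := by
  obtain ⟨k, h1, h2⟩ := h
  have hk : k = 1 := by
    have ha' : (a : ℤ) ≠ 0 := Int.natCast_ne_zero.mpr ha
    have : k * (a : ℤ) = 1 * a := by rw [← h1, one_mul]
    exact mul_right_cancel₀ ha' this
  rw [hk, one_zsmul] at h2
  exact h2

lemma SL.index_mkH {a : ℕ} (ha : a ≠ 0) (L : AddSubgroup B) (q : B ⧸ L) :
    (SL.mkH B a L q).index = a * L.index := by
  rw [SL.index_eq_mul, SL.projZ_mkH, SL.sliceB_mkH ha, Int.index_zmultiples, Int.natAbs_natCast]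

lemma SL.eq_mkH {H : AddSubgroup (ℤ × B)} {a : ℕ}
    (hK : SL.projZ H = zmultiples ((a : ℤ))) {b₀ : B} (hb₀ : ((a : ℤ), b₀) ∈ H) :
    H = SL.mkH B a (SL.sliceB H) (QuotientAddGroup.mk b₀) := by
  ext p
  constructor
  · intro hp
    have hx : p.1 ∈ SL.projZ H := ⟨p, hp, rfl⟩
    rw [hK] at hx
    obtain ⟨k, hk⟩ := mem_zmultiples_iff.mp hx
    refine ⟨k, by rw [← hk, smul_eq_mul], ?_⟩
    have hsm : (k • ((a : ℤ), b₀) : ℤ × B) ∈ H := H.zsmul_mem hb₀ k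
    have hsub : p - k • ((a : ℤ), b₀) ∈ H := H.sub_mem hp hsm
    have heq : p - k • ((a : ℤ), b₀) = ((0 : ℤ), p.2 - k • b₀) := by
      ext
      · show p.1 - k • (a : ℤ) = 0
        rw [hk]; ring
      · rfl
    rw [heq] at hsub
    have : p.2 - k • b₀ ∈ SL.sliceB H := hsub
    have := (QuotientAddGroup.eq_zero_iff _).mpr this
    rw [QuotientAddGroup.mk_sub, sub_eq_zero] at this
    rw [this, QuotientAddGroup.mk_zsmul]
  · rintro ⟨k, h1, h2⟩
    rw [← QuotientAddGroup.mk_zsmul] at h2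
    have h3 : -(p.2) + k • b₀ ∈ SL.sliceB H := QuotientAddGroup.eq.mp h2
    have h4 : p.2 - k • b₀ ∈ SL.sliceB H := by
      have := (SL.sliceB H).neg_mem h3
      rwa [add_comm, ← sub_eq_add_neg, neg_sub] at this
    have hmem2 : ((0 : ℤ), p.2 - k • b₀) ∈ H := h4
    have hmem1 : (k • ((a : ℤ), b₀) : ℤ × B) ∈ H := H.zsmul_mem hb₀ k
    have hp : p = k • ((a : ℤ), b₀) + ((0 : ℤ), p.2 - k • b₀) := by
      ext
      · show p.1 = k • (a : ℤ) + 0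
        rw [h1, smul_eq_mul, add_zero]
      · show p.2 = k • b₀ + (p.2 - k • b₀)
        abel
    rw [hp]
    exact H.add_mem hmem1 hmem2

end Step

section Count

variable {B : Type} [AddCommGroup B]

lemma SL.step (m : ℕ) (hm : 0 < m)
    (hfin : ∀ d, 0 < d → Finite {L : AddSubgroup B // L.index = d}) :
    Finite {H : AddSubgroup (ℤ × B) // H.index = m} ∧
    Nat.card {H : AddSubgroup (ℤ × B) // H.index = m}
      = ∑ d ∈ m.divisors, Nat.card {L : AddSubgroup B // L.index = d} * d := by
  classical
  haveI hf1 : ∀ a : {x // x ∈ m.divisors},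
      Finite {L : AddSubgroup B // L.index = m / (a : ℕ)} := fun a =>
    hfin _ (Nat.div_pos (Nat.le_of_dvd hm (Nat.dvd_of_mem_divisors a.2))
      (Nat.pos_of_mem_divisors a.2))
  have hdivpos : ∀ a : {x // x ∈ m.divisors}, 0 < m / (a : ℕ) := fun a =>
    Nat.div_pos (Nat.le_of_dvd hm (Nat.dvd_of_mem_divisors a.2)) (Nat.pos_of_mem_divisors a.2)
  haveI hf2 : ∀ (a : {x // x ∈ m.divisors})
      (L : {L : AddSubgroup B // L.index = m / (a : ℕ)}), Finite (B ⧸ L.1) := by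
    intro a L
    have h : L.1.index ≠ 0 := by rw [L.2]; exact (hdivpos a).ne'
    rw [AddSubgroup.index_eq_card] at h
    exact Nat.finite_of_card_ne_zero h
  let F : (Σ (a : {x // x ∈ m.divisors})
      (L : {L : AddSubgroup B // L.index = m / (a : ℕ)}), B ⧸ L.1) →
      {H : AddSubgroup (ℤ × B) // H.index = m} := fun t =>
    ⟨SL.mkH B t.1.1 t.2.1.1 t.2.2, by
      have ha0 : (t.1.1 : ℕ) ≠ 0 := (Nat.pos_of_mem_divisors t.1.2).ne'
      rw [SL.index_mkH ha0, t.2.1.2, Nat.mul_div_cancel' (Nat.dvd_of_mem_divisors t.1.2)]⟩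
  have hFs : Function.Surjective F := by
    rintro ⟨H, hH⟩
    obtain ⟨g, hg⟩ := Int.subgroup_cyclic (SL.projZ H)
    rw [← AddSubgroup.zmultiples_eq_closure] at hg
    set a := (SL.projZ H).index with ha
    have hKa : SL.projZ H = zmultiples ((a : ℤ)) := by
      rw [ha, hg, Int.index_zmultiples, SL.zmultiples_natAbs, ← hg]
    have hsplit : m = a * (SL.sliceB H).index := by rw [← hH, SL.index_eq_mul]
    have ha0 : a ≠ 0 := by
      rintro h0
      rw [h0, zero_mul] at hsplit
      omega
    have hmem : a ∈ m.divisors := Nat.mem_divisors.mpr ⟨⟨_, hsplit⟩, hm.ne'⟩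
    have hLind : (SL.sliceB H).index = m / a := by
      rw [hsplit, Nat.mul_div_cancel_left _ (Nat.pos_of_ne_zero ha0)]
    have hainK : ((a : ℤ)) ∈ SL.projZ H := by
      rw [hKa]; exact mem_zmultiples _
    obtain ⟨b₀, hb₀⟩ := SL.mem_projZ.mp hainK
    refine ⟨⟨⟨a, hmem⟩, ⟨SL.sliceB H, hLind⟩, QuotientAddGroup.mk b₀⟩, ?_⟩
    apply Subtype.ext
    show SL.mkH B a (SL.sliceB H) _ = H
    exact (SL.eq_mkH hKa hb₀).symm
  have hFi : Function.Injective F := by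
    rintro ⟨⟨a, ha⟩, ⟨L, hL⟩, q⟩ ⟨⟨a', ha'⟩, ⟨L', hL'⟩, q'⟩ h
    have h' : SL.mkH B a L q = SL.mkH B a' L' q' := congrArg Subtype.val h
    have ha0 : a ≠ 0 := (Nat.pos_of_mem_divisors ha).ne'
    have ha0' : a' ≠ 0 := (Nat.pos_of_mem_divisors ha').ne'
    have haa : a = a' := by
      have h1 := congrArg SL.projZ h'
      rw [SL.projZ_mkH, SL.projZ_mkH] at h1
      have h2 := congrArg AddSubgroup.index h1
      rwa [Int.index_zmultiples, Int.index_zmultiples, Int.natAbs_natCast, Int.natAbs_natCast] at h2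
    subst haa
    have hLL : L = L' := by
      have h1 := congrArg SL.sliceB h'
      rwa [SL.sliceB_mkH ha0, SL.sliceB_mkH ha0] at h1
    subst hLL
    have hqq : q = q' := by
      obtain ⟨b₀, hb₀⟩ := QuotientAddGroup.mk_surjective q
      have hmem : ((a : ℤ), b₀) ∈ SL.mkH B a L q :=
        ⟨1, by rw [one_mul], by rw [hb₀, one_zsmul]⟩
      rw [h'] at hmem
      rw [← hb₀]
      exact SL.q_mkH ha0 hmem
    subst hqq
    rfl
  have hcard := (Nat.card_eq_of_bijective F ⟨hFi, hFs⟩).symm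
  refine ⟨Finite.of_surjective F hFs, ?_⟩
  rw [hcard, SL.nat_card_sigma]
  have hterm : ∀ a : {x // x ∈ m.divisors},
      Nat.card (Σ (L : {L : AddSubgroup B // L.index = m / (a : ℕ)}), B ⧸ L.1)
        = Nat.card {L : AddSubgroup B // L.index = m / (a : ℕ)} * (m / (a : ℕ)) := by
    intro a
    letI : Fintype {L : AddSubgroup B // L.index = m / (a : ℕ)} := Fintype.ofFinite _
    rw [SL.nat_card_sigma]
    have heach : ∀ L : {L : AddSubgroup B // L.index = m / (a : ℕ)},
        Nat.card (B ⧸ L.1) = m / (a : ℕ) := fun L => by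
      rw [← AddSubgroup.index_eq_card, L.2]
    calc (∑ L : {L : AddSubgroup B // L.index = m / (a : ℕ)}, Nat.card (B ⧸ L.1))
        = ∑ _L : {L : AddSubgroup B // L.index = m / (a : ℕ)}, (m / (a : ℕ)) :=
          Finset.sum_congr rfl (fun L _ => heach L)
      _ = Nat.card {L : AddSubgroup B // L.index = m / (a : ℕ)} * (m / (a : ℕ)) := by
          rw [Finset.sum_const, Finset.card_univ, smul_eq_mul, Nat.card_eq_fintype_card]
  calc (∑ a : {x // x ∈ m.divisors},
        Nat.card (Σ (L : {L : AddSubgroup B // L.index = m / (a : ℕ)}), B ⧸ L.1))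
      = ∑ a : {x // x ∈ m.divisors},
          Nat.card {L : AddSubgroup B // L.index = m / (a : ℕ)} * (m / (a : ℕ)) :=
        Finset.sum_congr rfl (fun a _ => hterm a)
    _ = ∑ a ∈ m.divisors, Nat.card {L : AddSubgroup B // L.index = m / a} * (m / a) :=
        Finset.sum_coe_sort m.divisors
          (fun d => Nat.card {L : AddSubgroup B // L.index = m / d} * (m / d))
    _ = ∑ d ∈ m.divisors, Nat.card {L : AddSubgroup B // L.index = d} * d :=
        Nat.sum_div_divisors m (fun d => Nat.card {L : AddSubgroup B // L.index = d} * d)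

end Count

lemma SL.card_congr_of_addEquiv {G G' : Type} [AddCommGroup G] [AddCommGroup G']
    (e : G ≃+ G') (m : ℕ) :
    Nat.card {H : AddSubgroup G // H.index = m}
      = Nat.card {H : AddSubgroup G' // H.index = m} := by
  apply Nat.card_congr
  have hco : e.symm.toAddMonoidHom.comp e.toAddMonoidHom = AddMonoidHom.id G := by
    ext x; simp
  have hco' : e.toAddMonoidHom.comp e.symm.toAddMonoidHom = AddMonoidHom.id G' := by
    ext x; simp
  refine ⟨fun H => ⟨H.1.comap e.symm.toAddMonoidHom,
      by rw [AddSubgroup.index_comap_of_surjective _ e.symm.surjective]; exact H.2⟩,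
    fun H => ⟨H.1.comap e.toAddMonoidHom,
      by rw [AddSubgroup.index_comap_of_surjective _ e.surjective]; exact H.2⟩, ?_, ?_⟩
  · intro H
    apply Subtype.ext
    show (H.1.comap e.symm.toAddMonoidHom).comap e.toAddMonoidHom = H.1
    rw [AddSubgroup.comap_comap, hco, AddSubgroup.comap_id]
  · intro H
    apply Subtype.ext
    show (H.1.comap e.toAddMonoidHom).comap e.symm.toAddMonoidHom = H.1
    rw [AddSubgroup.comap_comap, hco', AddSubgroup.comap_id]

def SL.e3 : (Fin 3 → ℤ) ≃+ ℤ × ℤ × ℤ where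
  toFun f := (f 0, f 1, f 2)
  invFun p := ![p.1, p.2.1, p.2.2]
  left_inv f := by
    funext i
    fin_cases i <;> rfl
  right_inv p := rfl
  map_add' f g := rfl

theorem sublattice_count_three_eq_sum_mul_sigma (m : ℕ) (hm : 0 < m) :
    sublatticeCount 3 m = ∑ d ∈ m.divisors, d * ArithmeticFunction.sigma 1 d := by
  have hfin1 : ∀ d, 0 < d → Finite {L : AddSubgroup ℤ // L.index = d} :=
    fun d _ => inferInstance
  have h2 : ∀ d, 0 < d →
      Nat.card {H : AddSubgroup (ℤ × ℤ) // H.index = d} = ∑ e ∈ d.divisors, e := by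
    intro d hd
    rw [(SL.step d hd hfin1).2]
    refine Finset.sum_congr rfl fun e he => ?_
    rw [SL.int_base e (Nat.pos_of_mem_divisors he), one_mul]
  have hfin2 : ∀ d, 0 < d → Finite {L : AddSubgroup (ℤ × ℤ) // L.index = d} :=
    fun d hd => (SL.step d hd hfin1).1
  have h3 : Nat.card {H : AddSubgroup (ℤ × ℤ × ℤ) // H.index = m}
      = ∑ d ∈ m.divisors, (∑ e ∈ d.divisors, e) * d := by
    rw [(SL.step m hm hfin2).2]
    exact Finset.sum_congr rfl fun d hd => by rw [h2 d (Nat.pos_of_mem_divisors hd)]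
  have htrans := SL.card_congr_of_addEquiv SL.e3 m
  rw [sublatticeCount, htrans, h3]
  refine Finset.sum_congr rfl fun d hd => ?_
  rw [ArithmeticFunction.sigma_one_apply, mul_comm]
end
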